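/- For the 6-dimensional Lie algebra Φ_{6,6} with brackets [X,Y_i]=iY_i for i=1,...,5, [Y₁,Y₂]=Y₃, [Y₁,Y₃]=Y₄, [Y₁,Y₄]=Y₅, [Y₂,Y₃]=Y₅, the bracket satisfies the Jacobi identity and the eigenvalues of ad(F̂) for the principal element F̂ = (1/5)X of the Frobenius functional F = Y₅* are {0, 1/5, 2/5, 3/5, 4/5, 1}. -/

import Mathlib

noncomputable section

/-- The bracket of `Φ_{6,6}` on `Fin 6 → ℂ`, with basis `X, Y₁,…,Y₅` indexed
`0,…,5` and nonzero brackets `[X,Yᵢ] = i Yᵢ` (`i = 1,…,5`), `[Y₁,Y₂]=Y₃`,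
`[Y₁,Y₃]=Y₄`, `[Y₁,Y₄]=Y₅`, `[Y₂,Y₃]=Y₅`, extended antisymmetrically and
bilinearly. -/
def brPhi66 (x y : Fin 6 → ℂ) : Fin 6 → ℂ :=
  ![ 0,
     (x 0 * y 1 - x 1 * y 0),
     2 * (x 0 * y 2 - x 2 * y 0),
     3 * (x 0 * y 3 - x 3 * y 0) + (x 1 * y 2 - x 2 * y 1),
     4 * (x 0 * y 4 - x 4 * y 0) + (x 1 * y 3 - x 3 * y 1),
     5 * (x 0 * y 5 - x 5 * y 0) + (x 1 * y 4 - x 4 * y 1) + (x 2 * y 3 - x 3 * y 2) ]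

lemma br0 (x y : Fin 6 → ℂ) : brPhi66 x y 0 = 0 := rfl
lemma br1 (x y : Fin 6 → ℂ) : brPhi66 x y 1 = x 0 * y 1 - x 1 * y 0 := rfl
lemma br2 (x y : Fin 6 → ℂ) : brPhi66 x y 2 = 2 * (x 0 * y 2 - x 2 * y 0) := rfl
lemma br3 (x y : Fin 6 → ℂ) : brPhi66 x y 3 =
    3 * (x 0 * y 3 - x 3 * y 0) + (x 1 * y 2 - x 2 * y 1) := rfl
lemma br4 (x y : Fin 6 → ℂ) : brPhi66 x y 4 =
    4 * (x 0 * y 4 - x 4 * y 0) + (x 1 * y 3 - x 3 * y 1) := rfl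
lemma br5 (x y : Fin 6 → ℂ) : brPhi66 x y 5 =
    5 * (x 0 * y 5 - x 5 * y 0) + (x 1 * y 4 - x 4 * y 1) + (x 2 * y 3 - x 3 * y 2) := rfl

lemma jac0 (x y z : Fin 6 → ℂ) :
    brPhi66 (brPhi66 x y) z 0 + brPhi66 (brPhi66 y z) x 0 + brPhi66 (brPhi66 z x) y 0 = 0 := by
  simp only [br0]; ring
lemma jac1 (x y z : Fin 6 → ℂ) :
    brPhi66 (brPhi66 x y) z 1 + brPhi66 (brPhi66 y z) x 1 + brPhi66 (brPhi66 z x) y 1 = 0 := by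
  simp only [br0, br1, br2, br3, br4, br5]; ring
lemma jac2 (x y z : Fin 6 → ℂ) :
    brPhi66 (brPhi66 x y) z 2 + brPhi66 (brPhi66 y z) x 2 + brPhi66 (brPhi66 z x) y 2 = 0 := by
  simp only [br0, br1, br2, br3, br4, br5]; ring
lemma jac3 (x y z : Fin 6 → ℂ) :
    brPhi66 (brPhi66 x y) z 3 + brPhi66 (brPhi66 y z) x 3 + brPhi66 (brPhi66 z x) y 3 = 0 := by
  simp only [br0, br1, br2, br3, br4, br5]; ring
lemma jac4 (x y z : Fin 6 → ℂ) :
    brPhi66 (brPhi66 x y) z 4 + brPhi66 (brPhi66 y z) x 4 + brPhi66 (brPhi66 z x) y 4 = 0 := by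
  simp only [br0, br1, br2, br3, br4, br5]; ring
lemma jac5 (x y z : Fin 6 → ℂ) :
    brPhi66 (brPhi66 x y) z 5 + brPhi66 (brPhi66 y z) x 5 + brPhi66 (brPhi66 z x) y 5 = 0 := by
  simp only [br0, br1, br2, br3, br4, br5]; ring

/-- The map `x ↦ F([x,·])` for `F = Y₅*`. -/
def Lmap : (Fin 6 → ℂ) →ₗ[ℂ] Module.Dual ℂ (Fin 6 → ℂ) where
  toFun x :=
    { toFun := fun y => brPhi66 x y 5
      map_add' := by intro a b; simp only [br5, Pi.add_apply]; ring
      map_smul' := by intro c a; simp only [br5, Pi.smul_apply, smul_eq_mul, RingHom.id_apply]; ring }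
  map_add' := by
    intro a b; refine LinearMap.ext fun y => ?_
    simp only [br5, Pi.add_apply, LinearMap.coe_mk, AddHom.coe_mk, LinearMap.add_apply]; ring
  map_smul' := by
    intro c a; refine LinearMap.ext fun y => ?_
    simp only [br5, Pi.smul_apply, smul_eq_mul, RingHom.id_apply, LinearMap.coe_mk,
      AddHom.coe_mk, LinearMap.smul_apply]; ring

/-- The inverse of `Lmap`. -/
def Gmap : Module.Dual ℂ (Fin 6 → ℂ) →ₗ[ℂ] (Fin 6 → ℂ) where
  toFun φ := fun i =>
    (![1/5, 1, 1, -1, -1, -(1/5)] : Fin 6 → ℂ) i *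
      φ (Pi.single ((![5, 4, 3, 2, 1, 0] : Fin 6 → Fin 6) i) 1)
  map_add' := by intro a b; funext i; simp [mul_add]
  map_smul' := by intro c a; funext i; simp; ring

lemma g0 (φ : Module.Dual ℂ (Fin 6 → ℂ)) : Gmap φ 0 = 1/5 * φ (Pi.single 5 1) := rfl
lemma g1 (φ : Module.Dual ℂ (Fin 6 → ℂ)) : Gmap φ 1 = 1 * φ (Pi.single 4 1) := rfl
lemma g2 (φ : Module.Dual ℂ (Fin 6 → ℂ)) : Gmap φ 2 = 1 * φ (Pi.single 3 1) := rfl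
lemma g3 (φ : Module.Dual ℂ (Fin 6 → ℂ)) : Gmap φ 3 = -1 * φ (Pi.single 2 1) := rfl
lemma g4 (φ : Module.Dual ℂ (Fin 6 → ℂ)) : Gmap φ 4 = -1 * φ (Pi.single 1 1) := rfl
lemma g5 (φ : Module.Dual ℂ (Fin 6 → ℂ)) : Gmap φ 5 = -(1/5) * φ (Pi.single 0 1) := rfl

lemma gl_id (x : Fin 6 → ℂ) : Gmap (Lmap x) = x := by
  have e : ∀ j : Fin 6, Lmap x (Pi.single j 1) = brPhi66 x (Pi.single j 1) 5 := fun _ => rfl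
  funext i; fin_cases i <;>
    simp [g0, g1, g2, g3, g4, g5, e, br5, Pi.single_apply]

lemma lg_id (φ : Module.Dual ℂ (Fin 6 → ℂ)) : Lmap (Gmap φ) = φ := by
  refine LinearMap.ext fun y => ?_
  have hy := LinearMap.pi_apply_eq_sum_univ φ y
  show brPhi66 (Gmap φ) y 5 = φ y
  rw [hy, Fin.sum_univ_six]
  simp only [br5, g0, g1, g2, g3, g4, g5, smul_eq_mul]
  have h : ∀ j : Fin 6, (fun k => if j = k then (1:ℂ) else 0) = Pi.single j 1 := by
    intro j; funext k; simp [Pi.single_apply, eq_comm]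
  simp only [h]
  ring

/-- `η : g ≃ g*`, showing `F = Y₅*` is Frobenius. -/
def etaPhi66 : (Fin 6 → ℂ) ≃ₗ[ℂ] Module.Dual ℂ (Fin 6 → ℂ) :=
  LinearEquiv.ofLinear Lmap Gmap (LinearMap.ext fun φ => lg_id φ)
    (LinearMap.ext fun x => gl_id x)

def dvec : Fin 6 → ℂ := ![0, 1/5, 2/5, 3/5, 4/5, 1]
def Mmat : Matrix (Fin 6) (Fin 6) ℂ := Matrix.diagonal dvec

lemma dv0 : dvec 0 = 0 := rfl
lemma dv1 : dvec 1 = 1/5 := rfl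
lemma dv2 : dvec 2 = 2/5 := rfl
lemma dv3 : dvec 3 = 3/5 := rfl
lemma dv4 : dvec 4 = 4/5 := rfl
lemma dv5 : dvec 5 = 1 := rfl

lemma fhat_apply (j : Fin 6) :
    ((1/5 : ℂ) • (Pi.single 0 1 : Fin 6 → ℂ)) j = if j = 0 then 1/5 else 0 := by
  simp [Pi.single_apply]

lemma principal (x : Fin 6 → ℂ) :
    brPhi66 ((1/5 : ℂ) • (Pi.single 0 1 : Fin 6 → ℂ)) x 5 = x 5 := by
  simp [br5, fhat_apply]

lemma mv (x : Fin 6 → ℂ) (i : Fin 6) : Mmat.mulVec x i = dvec i * x i := by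
  simp [Mmat, Matrix.mulVec_diagonal]

lemma ad0 (x : Fin 6 → ℂ) :
    Mmat.mulVec x 0 = brPhi66 ((1/5 : ℂ) • (Pi.single 0 1 : Fin 6 → ℂ)) x 0 := by
  rw [mv, dv0, br0]; ring
lemma ad1 (x : Fin 6 → ℂ) :
    Mmat.mulVec x 1 = brPhi66 ((1/5 : ℂ) • (Pi.single 0 1 : Fin 6 → ℂ)) x 1 := by
  rw [mv, dv1, br1]; simp [fhat_apply]
lemma ad2 (x : Fin 6 → ℂ) :
    Mmat.mulVec x 2 = brPhi66 ((1/5 : ℂ) • (Pi.single 0 1 : Fin 6 → ℂ)) x 2 := by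
  rw [mv, dv2, br2]; simp [fhat_apply]; ring
lemma ad3 (x : Fin 6 → ℂ) :
    Mmat.mulVec x 3 = brPhi66 ((1/5 : ℂ) • (Pi.single 0 1 : Fin 6 → ℂ)) x 3 := by
  rw [mv, dv3, br3]; simp [fhat_apply]; ring
lemma ad4 (x : Fin 6 → ℂ) :
    Mmat.mulVec x 4 = brPhi66 ((1/5 : ℂ) • (Pi.single 0 1 : Fin 6 → ℂ)) x 4 := by
  rw [mv, dv4, br4]; simp [fhat_apply]; ring
lemma ad5 (x : Fin 6 → ℂ) :
    Mmat.mulVec x 5 = brPhi66 ((1/5 : ℂ) • (Pi.single 0 1 : Fin 6 → ℂ)) x 5 := by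
  rw [mv, dv5, br5]; simp [fhat_apply]

lemma Mmat_eq_ad (x : Fin 6 → ℂ) :
    Mmat.mulVec x = brPhi66 ((1/5 : ℂ) • (Pi.single 0 1 : Fin 6 → ℂ)) x := by
  funext i; fin_cases i
  exacts [ad0 x, ad1 x, ad2 x, ad3 x, ad4 x, ad5 x]

lemma eig_of_mem (k : Fin 6) : Module.End.HasEigenvalue (Matrix.toLin' Mmat) (dvec k) := by
  apply Module.End.hasEigenvalue_of_hasEigenvector (x := (Pi.single k 1 : Fin 6 → ℂ))
  constructor
  · rw [Module.End.mem_eigenspace_iff]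
    funext i
    rw [Matrix.toLin'_apply, mv]
    simp [Pi.single_apply]
    rcases eq_or_ne i k with h | h <;> simp [h]
  · simp [Function.ne_iff]

lemma dvec_mem (k : Fin 6) : dvec k ∈ ({0, 1/5, 2/5, 3/5, 4/5, 1} : Set ℂ) := by
  fin_cases k
  exacts [Or.inl dv0, Or.inr (Or.inl dv1), Or.inr (Or.inr (Or.inl dv2)),
    Or.inr (Or.inr (Or.inr (Or.inl dv3))), Or.inr (Or.inr (Or.inr (Or.inr (Or.inl dv4)))),
    Or.inr (Or.inr (Or.inr (Or.inr (Or.inr dv5))))]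

lemma spec : ∀ μ : ℂ, Module.End.HasEigenvalue (Matrix.toLin' Mmat) μ ↔
    μ ∈ ({0, 1/5, 2/5, 3/5, 4/5, 1} : Set ℂ) := by
  intro μ
  constructor
  · intro h
    obtain ⟨v, hv, hv0⟩ := h.exists_hasEigenvector
    have heq : Matrix.toLin' Mmat v = μ • v := Module.End.mem_eigenspace_iff.mp hv
    obtain ⟨k, hk⟩ := Function.ne_iff.mp hv0
    have hco : dvec k * v k = μ * v k := by
      have := congrFun heq k
      rwa [Matrix.toLin'_apply, mv, Pi.smul_apply, smul_eq_mul] at this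
    have : μ = dvec k := by
      have hk : v k ≠ 0 := hk
      exact (mul_right_cancel₀ hk hco).symm
    rw [this]; exact dvec_mem k
  · intro h
    rcases h with h | h | h | h | h | h
    · rw [h, ← dv0]; exact eig_of_mem 0
    · rw [h, ← dv1]; exact eig_of_mem 1
    · rw [h, ← dv2]; exact eig_of_mem 2
    · rw [h, ← dv3]; exact eig_of_mem 3
    · rw [h, ← dv4]; exact eig_of_mem 4
    · rw [h, ← dv5]; exact eig_of_mem 5

/-- For `Φ_{6,6}`: the bracket satisfies the Jacobi identity; `F = Y₅*` is a
Frobenius functional; `F̂ = (1/5) X` is its principal element; and the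
eigenvalues of `ad F̂` are `{0, 1/5, 2/5, 3/5, 4/5, 1}`. -/
theorem phi66_jacobi_and_spectrum :
    (∀ x y z : Fin 6 → ℂ,
      brPhi66 (brPhi66 x y) z + brPhi66 (brPhi66 y z) x + brPhi66 (brPhi66 z x) y = 0) ∧
    (∃ η : (Fin 6 → ℂ) ≃ₗ[ℂ] Module.Dual ℂ (Fin 6 → ℂ),
      ∀ x y : Fin 6 → ℂ, η x y = brPhi66 x y 5) ∧
    (∀ x : Fin 6 → ℂ, brPhi66 ((1/5 : ℂ) • (Pi.single 0 1 : Fin 6 → ℂ)) x 5 = x 5) ∧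
    ∃ M : Matrix (Fin 6) (Fin 6) ℂ,
      (∀ x : Fin 6 → ℂ, M.mulVec x = brPhi66 ((1/5 : ℂ) • (Pi.single 0 1 : Fin 6 → ℂ)) x) ∧
      ∀ μ : ℂ, Module.End.HasEigenvalue (Matrix.toLin' M) μ ↔
        μ ∈ ({0, 1/5, 2/5, 3/5, 4/5, 1} : Set ℂ) := by
  refine ⟨?_, ⟨etaPhi66, fun x y => rfl⟩, principal, Mmat, Mmat_eq_ad, spec⟩
  intro x y z
  funext i; fin_cases i
  exacts [jac0 x y z, jac1 x y z, jac2 x y z, jac3 x y z, jac4 x y z, jac5 x y z]
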